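/- Let H̄, Z̄ and M be real Hilbert spaces, H₀ ⊆ H̄ and Z₀ ⊆ Z̄ closed subspaces, U ∈ H̄ and Θ ∈ Z̄. Let a : H̄ × H̄ → ℝ be a bounded bilinear form with constant ‖a‖ such that a(v, v) ≥ α‖v‖² for all v ∈ H₀ (α > 0); let b : H̄ × M → ℝ be a bounded bilinear form such that sup_{0≠v∈H₀} b(v, m)/‖v‖ ≥ β‖m‖ for all m ∈ M (β > 0); let ã : H̄ × H̄ × H̄ → ℝ be a trilinear form bounded with constant C_ã; let c : Z̄ × Z̄ → ℝ be a bounded bilinear form with constant ‖c‖ such that c(τ, τ) ≥ γ‖τ‖² for all τ ∈ Z₀ (γ > 0); let c̃ : H̄ × Z̄ × Z̄ → ℝ be a trilinear form bounded with constant C_c̃; and let g : Z̄ → M' be Lipschitz with constant L_g and satisfy ‖g(ζ)‖_{M'} ≤ g₂ for all ζ ∈ Z̄. Fix R > 0 and assume: (i) c̃(w; τ, τ) ≥ 0 for every w ∈ U + H₀ with ‖w‖ ≤ R and every τ ∈ Z₀; (ii) (1/α)·[C_ã R² + ‖a‖·‖U‖ + ((α + ‖a‖)/β)·(g₂ + ‖b(U,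 ·)‖_{M'})] + ‖U‖ ≤ R; (iii) 2 C_ã R < α; (iv) L_S · L_{S̃} < 1, where L_S := (α + ‖a‖)·L_g/(β(α − 2 C_ã R)) and L_{S̃} := (C_c̃/γ)·(((‖c‖ + C_c̃ R)/γ) + 1)·‖Θ‖. Then there exists a unique triple (u, p, θ) with u ∈ U + H₀, ‖u‖ ≤ R, p ∈ M and θ ∈ Θ + Z₀ such that a(u, v) + ã(u, u, v) + b(v, p) = 0 for all v ∈ H₀, b(u, m) = ⟨g(θ), m⟩ for all m ∈ M, and c(θ, τ) + c̃(u; θ, τ) = 0 for all τ ∈ Z₀. -/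

import Mathlib

open InnerProductSpace RealInnerProductSpace

noncomputable section

/-- Restriction of a bilinear form along a continuous linear map. -/
def bilinRestrict {E F : Type*} [NormedAddCommGroup E] [NormedSpace ℝ E]
    [NormedAddCommGroup F] [NormedSpace ℝ F]
    (B : F →L[ℝ] F →L[ℝ] ℝ) (S : E →L[ℝ] F) : E →L[ℝ] E →L[ℝ] ℝ :=
  ((B.comp S).flip.comp S).flip

@[simp] lemma bilinRestrict_apply {E F : Type*} [NormedAddCommGroup E] [NormedSpace ℝ E]
    [NormedAddCommGroup F] [NormedSpace ℝ F]
    (B : F →L[ℝ] F →L[ℝ] ℝ) (S : E →L[ℝ] F) (x y : E) :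
    bilinRestrict B S x y = B (S x) (S y) := rfl

/-- Lax–Milgram: unique solvability of a coercive variational problem. -/
lemma lm_solve {V : Type*} [NormedAddCommGroup V] [InnerProductSpace ℝ V] [CompleteSpace V]
    (B : V →L[ℝ] V →L[ℝ] ℝ) (κ : ℝ) (hκ : 0 < κ) (hcoer : ∀ v, κ * ‖v‖ ^ 2 ≤ B v v)
    (f : V →L[ℝ] ℝ) : ∃! ζ : V, ∀ τ, B ζ τ = f τ := by
  have hc : IsCoercive B := ⟨κ, hκ, fun u => by have := hcoer u; nlinarith [this, sq_abs ‖u‖]⟩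
  set e := hc.continuousLinearEquivOfBilin
  set xf := (toDual ℝ V).symm f with hxf
  refine ⟨e.symm xf, ?_, ?_⟩
  · intro τ
    have h1 : ⟪e (e.symm xf), τ⟫_ℝ = B (e.symm xf) τ := hc.continuousLinearEquivOfBilin_apply _ _
    rw [e.apply_symm_apply] at h1
    rw [← h1, hxf, toDual_symm_apply]
  · intro ζ' hζ'
    have h2 : ∀ w, ⟪xf, w⟫_ℝ = B ζ' w := by
      intro w
      rw [hxf, toDual_symm_apply, hζ' w]
    have := hc.unique_continuousLinearEquivOfBilin h2
    -- this : xf = e ζ'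
    have : e.symm xf = ζ' := by rw [this, e.symm_apply_apply]
    exact this.symm

lemma arith_sq {β x y : ℝ} (hβ : 0 ≤ β) (hy : 0 ≤ y) (h : β * y ≤ x) :
    β ^ 2 * y ^ 2 ≤ x ^ 2 := by nlinarith [mul_nonneg hβ hy]

lemma arith_cancel {x f fw bb w : ℝ} (hβ : 0 < bb) (hf : 0 ≤ f) (hx : 0 ≤ x)
    (h4 : x ^ 2 = fw) (h5 : fw ≤ f * w) (h6 : bb * w ≤ x) : bb * x ≤ f := by
  rcases eq_or_lt_of_le hx with h | h
  · rw [← h, mul_zero]; exact hf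
  · have h8 : bb * x * x ≤ f * x := by nlinarith
    exact le_of_mul_le_mul_right h8 h

lemma arith_div {κ A n : ℝ} (hκ : 0 < κ) (hn : 0 ≤ n) (hA : 0 ≤ A)
    (h : κ * n ^ 2 ≤ A * n) : κ * n ≤ A := by
  rcases eq_or_lt_of_le hn with h1 | h1
  · rw [← h1, mul_zero]; exact hA
  · have := mul_le_mul_of_nonneg_right (le_refl (κ * n)) h1.le
    nlinarith

lemma arith_key {al B A n : ℝ} (hn : 0 ≤ n) (hA : 0 ≤ A)
    (h : al * n ^ 2 ≤ A * n + B * n ^ 2) : (al - B) * n ≤ A := by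
  rcases eq_or_lt_of_le hn with h1 | h1
  · rw [← h1, mul_zero]; exact hA
  · nlinarith

lemma arith_nsdiff {al Cta R na bb nvd nzd nd nu1 nu2 nf azz avz t1 t2 : ℝ}
    (hα : 0 < al) (hβ : 0 < bb) (hcontr : 2 * Cta * R < al) (hCta : 0 ≤ Cta)
    (hna : 0 ≤ na) (hnvd : 0 ≤ nvd) (hnzd : 0 ≤ nzd) (hnd : 0 ≤ nd)
    (hcoer : al * nzd ^ 2 ≤ azz) (heq : azz = -avz - (t1 + t2))
    (k1 : |avz| ≤ na * nvd * nzd) (k2 : |t1| ≤ Cta * nd * nu1 * nzd)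
    (k3 : |t2| ≤ Cta * nu2 * nd * nzd) (hu1 : nu1 ≤ R) (hu2 : nu2 ≤ R)
    (hnu1 : 0 ≤ nu1) (hnu2 : 0 ≤ nu2)
    (hsum : nd ≤ nvd + nzd) (hlift : bb * nvd ≤ nf) :
    (al - 2 * Cta * R) * nd ≤ ((al + na) / bb) * nf := by
  have hR : 0 ≤ R := le_trans hnu1 hu1
  have hcr : 0 ≤ Cta * nd * nzd := by positivity
  have j2 : -(Cta * nd * nzd * R) ≤ t1 := by
    have w1 := mul_le_mul_of_nonneg_left hu1 hcr
    linarith [neg_abs_le t1]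
  have j3 : -(Cta * nd * nzd * R) ≤ t2 := by
    have w1 := mul_le_mul_of_nonneg_left hu2 hcr
    linarith [neg_abs_le t2]
  have m1 : al * nzd ^ 2 ≤ na * nvd * nzd + 2 * (Cta * nd * nzd * R) := by
    linarith [neg_abs_le avz]
  have m2 : Cta * nd * nzd * R ≤ Cta * R * (nvd + nzd) * nzd := by
    have w2 := mul_le_mul_of_nonneg_left hsum (by positivity : (0:ℝ) ≤ Cta * R * nzd)
    linarith
  have h1 : (al - 2 * Cta * R) * nzd ≤ (na + 2 * Cta * R) * nvd := by
    have hA : 0 ≤ (na + 2 * Cta * R) * nvd := by positivity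
    refine arith_key hnzd hA ?_
    linarith
  have h0 : (0:ℝ) < al - 2 * Cta * R := by linarith
  have h2 : (al - 2 * Cta * R) * nd ≤ (al + na) * nvd := by
    have w3 := mul_le_mul_of_nonneg_left hsum h0.le
    linarith
  have h3 : (al + na) * nvd ≤ ((al + na) / bb) * nf := by
    rw [div_mul_eq_mul_div, le_div_iff₀ hβ]
    have w4 := mul_le_mul_of_nonneg_left hlift (by positivity : (0:ℝ) ≤ al + na)
    linarith
  linarith

lemma arith_lindiff {al Cta R ndd nw1 nw2 ndw add t1 t2 : ℝ}
    (hα : 0 < al) (hCta : 0 ≤ Cta) (hR : 0 < R)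
    (hndd : 0 ≤ ndd) (hndw : 0 ≤ ndw) (hnw1 : 0 ≤ nw1) (hnw2 : 0 ≤ nw2)
    (hw1 : nw1 ≤ R) (hw2 : nw2 ≤ R)
    (hcoer : al * ndd ^ 2 ≤ add) (heq : add = -(t1 + t2))
    (k1 : |t1| ≤ Cta * ndw * nw1 * ndd) (k2 : |t2| ≤ Cta * nw2 * ndw * ndd) :
    al * ndd ≤ 2 * Cta * R * ndw := by
  have hcr : 0 ≤ Cta * ndw * ndd := by positivity
  have j1 : -(Cta * ndw * ndd * R) ≤ t1 := by
    have w1 := mul_le_mul_of_nonneg_left hw1 hcr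
    linarith [neg_abs_le t1]
  have j2 : -(Cta * ndw * ndd * R) ≤ t2 := by
    have w1 := mul_le_mul_of_nonneg_left hw2 hcr
    linarith [neg_abs_le t2]
  have hmain : al * ndd ^ 2 ≤ 2 * Cta * R * ndw * ndd := by linarith
  exact arith_div hα hndd (by positivity) hmain

lemma arith_trans {ga Ctc nc R nT nd nth2 nz2 ndw : ℝ}
    (hγ : 0 < ga) (hCtc : 0 ≤ Ctc) (hnc : 0 ≤ nc) (hR : 0 ≤ R) (hnT : 0 ≤ nT)
    (hnd : 0 ≤ nd) (hnth2 : 0 ≤ nth2) (hnz2 : 0 ≤ nz2) (hndw : 0 ≤ ndw)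
    (h1 : ga * nd ≤ Ctc * ndw * nth2) (h2 : ga * nz2 ≤ (nc + Ctc * R) * nT)
    (h3 : nth2 ≤ nT + nz2) :
    nd ≤ (Ctc / ga) * (((nc + Ctc * R) / ga) + 1) * nT * ndw := by
  have key : nth2 ≤ (((nc + Ctc * R) / ga) + 1) * nT := by
    have h4 : nz2 ≤ (nc + Ctc * R) * nT / ga := by
      rw [le_div_iff₀ hγ]; linarith
    have h5 : (((nc + Ctc * R) / ga) + 1) * nT = (nc + Ctc * R) * nT / ga + nT := by
      field_simp
    rw [h5]; linarith
  have h6 : ga * nd ≤ Ctc * ndw * ((((nc + Ctc * R) / ga) + 1) * nT) := by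
    refine le_trans h1 (mul_le_mul_of_nonneg_left key (mul_nonneg hCtc hndw))
  rw [← le_div_iff₀' hγ] at h6
  refine le_trans h6 (le_of_eq ?_)
  field_simp

lemma arith_outer {al na bb Lg LT D ndu ndth ndg ndw : ℝ}
    (hD : 0 < D) (hβ : 0 < bb) (hal : 0 < al) (hna : 0 ≤ na) (hLg : 0 ≤ Lg)
    (hLT : 0 ≤ LT) (hndw : 0 ≤ ndw) (hndth : 0 ≤ ndth) (hndg : 0 ≤ ndg)
    (h1 : D * ndu ≤ ((al + na) / bb) * ndg) (h2 : ndg ≤ Lg * ndth) (h3 : ndth ≤ LT * ndw) :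
    ndu ≤ (((al + na) * Lg / (bb * D)) * LT) * ndw := by
  have c1 : 0 ≤ (al + na) / bb := by positivity
  have e1 : D * ndu ≤ ((al + na) / bb) * (Lg * (LT * ndw)) := by
    refine le_trans h1 (mul_le_mul_of_nonneg_left ?_ c1)
    exact le_trans h2 (mul_le_mul_of_nonneg_left h3 hLg)
  rw [← le_div_iff₀' hD] at e1
  refine le_trans e1 (le_of_eq ?_)
  field_simp
set_option maxHeartbeats 4000000 in
/-- existence and uniqueness of a weak solution to the coupled
flow–transport problem with membrane condition `b(u,·) = g(θ)`, obtained by the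
Banach fixed-point theorem (abstract form of Section 3.3 of the paper). -/
theorem coupled_flow_transport_existence_uniqueness
    {Hb Zb M : Type*}
    [NormedAddCommGroup Hb] [InnerProductSpace ℝ Hb] [CompleteSpace Hb]
    [NormedAddCommGroup Zb] [InnerProductSpace ℝ Zb] [CompleteSpace Zb]
    [NormedAddCommGroup M] [InnerProductSpace ℝ M] [CompleteSpace M]
    (H₀ : Submodule ℝ Hb) (hH₀ : IsClosed (H₀ : Set Hb))
    (Z₀ : Submodule ℝ Zb) (hZ₀ : IsClosed (Z₀ : Set Zb))
    (U : Hb) (Θ : Zb)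
    (a : Hb →L[ℝ] Hb →L[ℝ] ℝ)
    (α : ℝ) (hα : 0 < α) (hacoer : ∀ v ∈ H₀, α * ‖v‖ ^ 2 ≤ a v v)
    (b : Hb →L[ℝ] M →L[ℝ] ℝ)
    (β : ℝ) (hβ : 0 < β)
    (hinfsup : ∀ m : M,
      β * ‖m‖ ≤ ⨆ v : {v : Hb // v ∈ H₀ ∧ v ≠ 0}, b v.1 m / ‖v.1‖)
    (ta : Hb →L[ℝ] Hb →L[ℝ] Hb →L[ℝ] ℝ)
    (Cta : ℝ) (hta : ∀ w u v : Hb, |ta w u v| ≤ Cta * ‖w‖ * ‖u‖ * ‖v‖)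
    (c : Zb →L[ℝ] Zb →L[ℝ] ℝ)
    (γ : ℝ) (hγ : 0 < γ) (hccoer : ∀ τ ∈ Z₀, γ * ‖τ‖ ^ 2 ≤ c τ τ)
    (tc : Hb →L[ℝ] Zb →L[ℝ] Zb →L[ℝ] ℝ)
    (Ctc : ℝ) (htc : ∀ (w : Hb) (θ τ : Zb), |tc w θ τ| ≤ Ctc * ‖w‖ * ‖θ‖ * ‖τ‖)
    (g : Zb → M →L[ℝ] ℝ)
    (Lg g₂ : ℝ)
    (hgLip : ∀ ζ₁ ζ₂ : Zb, ‖g ζ₁ - g ζ₂‖ ≤ Lg * ‖ζ₁ - ζ₂‖)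
    (hgbdd : ∀ ζ : Zb, ‖g ζ‖ ≤ g₂)
    (R : ℝ) (hR : 0 < R)
    -- (i) nonnegativity of the convective transport form along admissible velocities
    (hpos : ∀ w : Hb, w - U ∈ H₀ → ‖w‖ ≤ R → ∀ τ ∈ Z₀, 0 ≤ tc w τ τ)
    -- (ii) ball invariance smallness condition
    (hball :
      (1 / α) * (Cta * R ^ 2 + ‖a‖ * ‖U‖ + ((α + ‖a‖) / β) * (g₂ + ‖b U‖)) + ‖U‖ ≤ R)
    -- (iii) contraction condition for the Navier–Stokes fixed point
    (hcontr : 2 * Cta * R < α)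
    -- (iv) contraction condition for the coupled fixed point: L_S · L_S̃ < 1
    (hLT :
      ((α + ‖a‖) * Lg / (β * (α - 2 * Cta * R))) *
        ((Ctc / γ) * (((‖c‖ + Ctc * R) / γ) + 1) * ‖Θ‖) < 1) :
    ∃! sol : Hb × M × Zb,
      sol.1 - U ∈ H₀ ∧ ‖sol.1‖ ≤ R ∧ sol.2.2 - Θ ∈ Z₀ ∧
      (∀ v ∈ H₀, a sol.1 v + ta sol.1 sol.1 v + b v sol.2.1 = 0) ∧
      (∀ m : M, b sol.1 m = g sol.2.2 m) ∧
      (∀ τ ∈ Z₀, c sol.2.2 τ + tc sol.1 sol.2.2 τ = 0) := by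
  classical
  have hg₂0 : 0 ≤ g₂ := le_trans (norm_nonneg _) (hgbdd 0)
  haveI : CompleteSpace Z₀ := hZ₀.completeSpace_coe
  haveI : CompleteSpace H₀ := hH₀.completeSpace_coe
  -- the transport solution operator (Lax–Milgram on Z₀)
  have transport : ∀ w : Hb, w - U ∈ H₀ → ‖w‖ ≤ R →
      ∃! θ : Zb, θ - Θ ∈ Z₀ ∧ ∀ τ ∈ Z₀, c θ τ + tc w θ τ = 0 := by
    intro w hw1 hw2
    set cw : Zb →L[ℝ] Zb →L[ℝ] ℝ := c + tc w with hcw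
    have hcwa : ∀ σ τ : Zb, cw σ τ = c σ τ + tc w σ τ := fun σ τ => rfl
    set d := bilinRestrict cw Z₀.subtypeL with hd
    have hda : ∀ σ τ : Z₀, d σ τ = cw σ τ := fun σ τ => rfl
    have hcoerd : ∀ τ : Z₀, γ * ‖τ‖ ^ 2 ≤ d τ τ := by
      intro τ
      have h1 := hccoer τ τ.2
      have h2 := hpos w hw1 hw2 τ τ.2
      have h3 : ‖τ‖ = ‖(τ : Zb)‖ := rfl
      rw [hda, hcwa, h3]
      linarith
    set f : Z₀ →L[ℝ] ℝ := (-(cw Θ)).comp Z₀.subtypeL with hf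
    have hfa : ∀ τ : Z₀, f τ = -(cw Θ τ) := fun τ => rfl
    obtain ⟨ζ, hζ, hζu⟩ := lm_solve d γ hγ hcoerd f
    refine ⟨Θ + (ζ : Zb), ⟨by simpa using ζ.2, ?_⟩, ?_⟩
    · intro τ hτ
      have h4 := hζ ⟨τ, hτ⟩
      rw [hda, hfa] at h4
      have h5 : cw (Θ + (ζ : Zb)) τ = cw Θ τ + cw (ζ : Zb) τ := by
        rw [map_add, ContinuousLinearMap.add_apply]
      have h6 : c (Θ + (ζ : Zb)) τ + tc w (Θ + (ζ : Zb)) τ = cw (Θ + (ζ : Zb)) τ := rfl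
      rw [h6, h5]
      simp only [Submodule.coe_subtypeL', Submodule.coe_subtype] at h4
      linarith
    · rintro θ' ⟨hθ'1, hθ'2⟩
      have hζ' : ∀ τ : Z₀, d ⟨θ' - Θ, hθ'1⟩ τ = f τ := by
        intro τ
        rw [hda, hfa]
        have h7 := hθ'2 τ τ.2
        have h8 : cw (θ' - Θ) τ = cw θ' τ - cw Θ τ := by
          rw [map_sub, ContinuousLinearMap.sub_apply]
        have h9 : cw θ' τ = c θ' τ + tc w θ' τ := rfl
        simp only [Submodule.coe_subtypeL', Submodule.coe_subtype]
        rw [h8, h9]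
        linarith
      have h10 := hζu ⟨θ' - Θ, hθ'1⟩ hζ'
      have h11 : θ' - Θ = (ζ : Zb) := congrArg Subtype.val h10
      rw [← h11]; abel
  rcases subsingleton_or_nontrivial Hb with hHs | hHn
  · -- degenerate case: Hb is trivial
    have hz : ∀ x : Hb, x = 0 := fun x => Subsingleton.elim x 0
    have hM : ∀ m : M, m = 0 := by
      intro m
      have h1 := hinfsup m
      haveI he : IsEmpty {v : Hb // v ∈ H₀ ∧ v ≠ 0} := ⟨fun v => v.2.2 (hz v.1)⟩
      rw [Real.iSup_of_isEmpty] at h1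
      have h2 : ‖m‖ = 0 := le_antisymm (by nlinarith [norm_nonneg m]) (norm_nonneg m)
      simpa using h2
    have hU0 : U = 0 := hz U
    obtain ⟨θ₀, ⟨hθ₀1, hθ₀2⟩, hθ₀u⟩ :=
      transport U (by rw [hU0]; simpa using H₀.zero_mem) (by rw [hU0]; simpa using hR.le)
    refine ⟨(0, 0, θ₀), ⟨?_, ?_, hθ₀1, ?_, ?_, ?_⟩, ?_⟩
    · rw [hU0]; simpa using H₀.zero_mem
    · simpa using hR.le
    · intro v hv
      rw [hz v]
      simp only [map_zero, ContinuousLinearMap.zero_apply, add_zero, zero_add]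
    · intro m
      rw [hM m]
      simp only [map_zero, ContinuousLinearMap.zero_apply]
    · intro τ hτ
      have := hθ₀2 τ hτ
      rw [hU0] at this
      simpa using this
    · rintro ⟨u, p, θ⟩ ⟨h1, h2, h3, h4, h5, h6⟩
      have hθ : θ = θ₀ := by
        apply hθ₀u
        refine ⟨h3, fun τ hτ => ?_⟩
        have := h6 τ hτ
        rw [hz u, ← hU0] at this
        exact this
      simp only [Prod.mk.injEq]
      exact ⟨hz u, hM p, hθ⟩
  · -- main case : Hb nontrivial
    obtain ⟨x₀, hx₀⟩ := exists_ne (0 : Hb)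
    have hCta : 0 ≤ Cta := by
      have h1 := hta x₀ x₀ x₀
      have h2 : 0 < ‖x₀‖ := norm_pos_iff.mpr hx₀
      have h3 : 0 < ‖x₀‖ * ‖x₀‖ * ‖x₀‖ := by positivity
      nlinarith [abs_nonneg (ta x₀ x₀ x₀)]
    have hUR : ‖U‖ ≤ R := by
      have h1 : 0 ≤ Cta * R ^ 2 := by positivity
      have h2 : 0 ≤ ‖a‖ * ‖U‖ := by positivity
      have h3 : 0 ≤ (α + ‖a‖) / β * (g₂ + ‖b U‖) :=
        mul_nonneg (div_nonneg (by positivity) hβ.le) (add_nonneg hg₂0 (norm_nonneg _))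
      have h4 : 0 ≤ (1 / α) * (Cta * R ^ 2 + ‖a‖ * ‖U‖ + (α + ‖a‖) / β * (g₂ + ‖b U‖)) :=
        mul_nonneg (by positivity) (by linarith)
      linarith
    -- the "adjoint" operator S : M → H₀ with ⟪S m, v⟫ = b v m
    obtain ⟨S, hS⟩ : ∃ S : M →L[ℝ] H₀, ∀ (m : M) (v : H₀), ⟪S m, v⟫_ℝ = b (v : Hb) m := by
      set Bfun : M →L[ℝ] (H₀ →L[ℝ] ℝ) :=
        ((ContinuousLinearMap.compL ℝ H₀ Hb ℝ).flip H₀.subtypeL).comp b.flip with hBfun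
      have hBfa : ∀ (m : M) (v : H₀), Bfun m v = b (v : Hb) m := fun m v => rfl
      have hBfb : ∀ m : M, ‖Bfun m‖ ≤ ‖b‖ * ‖m‖ := by
        intro m
        refine ContinuousLinearMap.opNorm_le_bound _ (by positivity) (fun v => ?_)
        rw [hBfa]
        calc ‖b (v : Hb) m‖ ≤ ‖b‖ * ‖(v : Hb)‖ * ‖m‖ := b.le_opNorm₂ _ _
          _ = ‖b‖ * ‖m‖ * ‖v‖ := by
              have hnv : ‖(v : Hb)‖ = ‖v‖ := rfl
              rw [hnv]; ring
      set Slin : M →ₗ[ℝ] H₀ :=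
        { toFun := fun m => (toDual ℝ H₀).symm (Bfun m)
          map_add' := by intro x y; rw [map_add, map_add]
          map_smul' := by intro r x; rw [map_smul]; simp } with hSlin
      refine ⟨Slin.mkContinuous ‖b‖ (fun m => by
        have h1 : ‖Slin m‖ = ‖Bfun m‖ := by
          show ‖(toDual ℝ H₀).symm (Bfun m)‖ = ‖Bfun m‖
          exact LinearIsometryEquiv.norm_map _ _
        rw [h1]; exact hBfb m), fun m v => ?_⟩
      show ⟪(toDual ℝ H₀).symm (Bfun m), v⟫_ℝ = b (v : Hb) m
      rw [toDual_symm_apply, hBfa]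
    have hSlow : ∀ m : M, β * ‖m‖ ≤ ‖S m‖ := by
      intro m
      refine le_trans (hinfsup m) (Real.iSup_le ?_ (norm_nonneg _))
      rintro ⟨v, hv, hv0⟩
      have h1 : b v m = ⟪S m, (⟨v, hv⟩ : H₀)⟫_ℝ := (hS m ⟨v, hv⟩).symm
      have h2 : ⟪S m, (⟨v, hv⟩ : H₀)⟫_ℝ ≤ ‖S m‖ * ‖(⟨v, hv⟩ : H₀)‖ :=
        real_inner_le_norm _ _
      have h3 : ‖(⟨v, hv⟩ : H₀)‖ = ‖v‖ := rfl
      rw [div_le_iff₀ (norm_pos_iff.mpr hv0)]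
      rw [h3] at h2
      linarith [h1 ▸ h2]
    have hSinj : ∀ m : M, S m = 0 → m = 0 := by
      intro m hm
      have h1 := hSlow m
      rw [hm, norm_zero] at h1
      have : ‖m‖ = 0 := le_antisymm (by nlinarith [norm_nonneg m]) (norm_nonneg m)
      simpa using this
    have hsymb : ∀ m n : M, b (S n : Hb) m = b (S m : Hb) n := by
      intro m n
      rw [← hS m (S n), ← hS n (S m)]
      exact real_inner_comm _ _
    -- inf-sup lifting : solvability of the constraint equation
    have lift : ∀ f : M →L[ℝ] ℝ,
        ∃ v : H₀, (∀ m, b (v : Hb) m = f m) ∧ β * ‖(v : Hb)‖ ≤ ‖f‖ := by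
      intro f
      set Q : M →L[ℝ] M →L[ℝ] ℝ := (b.comp (H₀.subtypeL.comp S)).flip with hQ
      have hQa : ∀ m n : M, Q m n = b (S n : Hb) m := fun m n => rfl
      have hQcoer : ∀ m, β ^ 2 * ‖m‖ ^ 2 ≤ Q m m := by
        intro m
        rw [hQa]
        have h1 : b (S m : Hb) m = ⟪S m, S m⟫_ℝ := (hS m (S m)).symm
        rw [h1, real_inner_self_eq_norm_sq]
        exact arith_sq hβ.le (norm_nonneg m) (hSlow m)
      obtain ⟨w, hw, -⟩ := lm_solve Q (β ^ 2) (by positivity) hQcoer f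
      refine ⟨S w, ?_, ?_⟩
      · intro m
        have h2 := hw m
        rw [hQa, hsymb] at h2
        exact h2
      · have h3 : ‖(S w : Hb)‖ = ‖S w‖ := rfl
        have h4 : ‖S w‖ ^ 2 = f w := by
          rw [← real_inner_self_eq_norm_sq, hS w (S w), ← hQa w w, hw w]
        have h5 : f w ≤ ‖f‖ * ‖w‖ := le_trans (le_abs_self _) (f.le_opNorm w)
        have h6 := hSlow w
        rw [h3]
        exact arith_cancel hβ (norm_nonneg f) (norm_nonneg (S w)) h4 h5 h6
    -- pressure recovery from the inf-sup condition
    have pres : ∀ F : H₀ →L[ℝ] ℝ, (∀ v : H₀, (∀ m, b (v : Hb) m = 0) → F v = 0) →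
        ∃ p : M, ∀ v : H₀, b (v : Hb) p = F v := by
      intro F hF
      set RS : Submodule ℝ H₀ := LinearMap.range (S : M →ₗ[ℝ] H₀) with hRS
      have hanti : AntilipschitzWith (β⁻¹).toNNReal S := by
        apply ContinuousLinearMap.antilipschitz_of_bound
        intro x
        have h1 := hSlow x
        rw [Real.coe_toNNReal _ (by positivity), inv_mul_eq_div, le_div_iff₀ hβ]
        linarith
      have hRSclosed : IsClosed (RS : Set H₀) := by
        have h2 := hanti.isClosed_range S.uniformContinuous
        have h3 : (RS : Set H₀) = Set.range S := by
          ext x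
          simp [hRS, LinearMap.mem_range, Set.mem_range]
        rw [h3]
        exact h2
      haveI : CompleteSpace RS := hRSclosed.completeSpace_coe
      set fF := (toDual ℝ H₀).symm F with hfF
      have hmem : fF ∈ RS := by
        rw [← Submodule.orthogonal_orthogonal RS, Submodule.mem_orthogonal]
        intro v hv
        rw [Submodule.mem_orthogonal] at hv
        have h3 : ∀ m : M, b ((v : H₀) : Hb) m = 0 := by
          intro m
          rw [← hS m (v : H₀)]
          exact hv (S m) (LinearMap.mem_range.mpr ⟨m, rfl⟩)
        have h4 : F v = 0 := hF v h3
        rw [real_inner_comm, hfF, toDual_symm_apply]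
        exact h4
      obtain ⟨p, hp⟩ := LinearMap.mem_range.mp hmem
      refine ⟨p, fun v => ?_⟩
      rw [← hS p v]
      rw [ContinuousLinearMap.coe_coe] at hp
      rw [hp, hfF, toDual_symm_apply]
    -- the divergence-free subspace, as a submodule of Hb
    obtain ⟨V, hVmem, hVclosed⟩ : ∃ V : Submodule ℝ Hb,
        (∀ v : Hb, v ∈ V ↔ v ∈ H₀ ∧ ∀ m : M, b v m = 0) ∧ IsClosed (V : Set Hb) := by
      refine ⟨H₀ ⊓ (⨅ m : M, LinearMap.ker (b.flip m : Hb →ₗ[ℝ] ℝ)), fun v => ?_, ?_⟩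
      · rw [Submodule.mem_inf]
        have h1 : v ∈ (⨅ m : M, LinearMap.ker (b.flip m : Hb →ₗ[ℝ] ℝ)) ↔ ∀ m : M, b v m = 0 := by
          rw [Submodule.mem_iInf]
          constructor
          · intro h m
            have := h m
            rwa [LinearMap.mem_ker] at this
          · intro h m
            rw [LinearMap.mem_ker]
            exact h m
        rw [h1]
      · have h1 : ((H₀ ⊓ (⨅ m : M, LinearMap.ker (b.flip m : Hb →ₗ[ℝ] ℝ)) : Submodule ℝ Hb) : Set Hb) =
            (H₀ : Set Hb) ∩ ⋂ m : M, ((LinearMap.ker (b.flip m : Hb →ₗ[ℝ] ℝ) : Submodule ℝ Hb) : Set Hb) := by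
          rw [Submodule.coe_inf, Submodule.coe_iInf]
        rw [h1]
        exact hH₀.inter (isClosed_iInter fun m => ContinuousLinearMap.isClosed_ker (b.flip m))
    haveI : CompleteSpace V := hVclosed.completeSpace_coe
    -- linearized (Oseen/Stokes-type) solver with frozen convection
    have stokes : ∀ w : Hb, ‖w‖ ≤ R → ∀ f : M →L[ℝ] ℝ, ‖f‖ ≤ g₂ →
        ∃ u : Hb, ∃ p : M, (u - U ∈ H₀) ∧ ‖u‖ ≤ R ∧
          (∀ v ∈ H₀, a u v + ta w w v + b v p = 0) ∧ (∀ m, b u m = f m) := by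
      intro w hw f hf
      obtain ⟨vℓ, hvℓ1, hvℓ2⟩ := lift (f - b U)
      have hvℓ3 : β * ‖(vℓ : Hb)‖ ≤ g₂ + ‖b U‖ := by
        refine le_trans hvℓ2 (le_trans (norm_sub_le _ _) ?_)
        exact add_le_add_left hf _
      set u₀ : Hb := U + (vℓ : Hb) with hu₀
      set dV : V →L[ℝ] V →L[ℝ] ℝ := bilinRestrict a V.subtypeL with hdV
      have hdVa : ∀ z v : V, dV z v = a (z : Hb) (v : Hb) := fun _ _ => rfl
      have hdVcoer : ∀ z : V, α * ‖z‖ ^ 2 ≤ dV z z := by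
        intro z
        rw [hdVa]
        have h1 := hacoer (z : Hb) ((hVmem _).mp z.2).1
        have h2 : ‖z‖ = ‖(z : Hb)‖ := rfl
        rw [h2]
        exact h1
      set FV : V →L[ℝ] ℝ := (-(a u₀ + ta w w)).comp V.subtypeL with hFV
      have hFVa : ∀ v : V, FV v = -(a u₀ (v : Hb) + ta w w (v : Hb)) := fun _ => rfl
      obtain ⟨z, hz, -⟩ := lm_solve dV α hα hdVcoer FV
      set zb : Hb := (z : Hb) with hzb
      set u : Hb := u₀ + zb with hu
      have hzbH : zb ∈ H₀ := ((hVmem _).mp z.2).1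
      have hzb0 : ∀ m : M, b zb m = 0 := ((hVmem _).mp z.2).2
      -- norm bound for z
      have hzbnd : α * ‖zb‖ ≤ Cta * R ^ 2 + ‖a‖ * ‖U‖ + ‖a‖ * ‖(vℓ : Hb)‖ := by
        have e1 : a zb zb = FV z := by rw [← hdVa z z, hz z]
        have e2 : FV z = -(a u₀ zb + ta w w zb) := hFVa z
        have e3 : α * ‖zb‖ ^ 2 ≤ a zb zb := hacoer zb hzbH
        have e4 : |a u₀ zb| ≤ ‖a‖ * ‖u₀‖ * ‖zb‖ := by
          have := a.le_opNorm₂ u₀ zb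
          rwa [Real.norm_eq_abs] at this
        have e5 : |ta w w zb| ≤ Cta * ‖w‖ * ‖w‖ * ‖zb‖ := hta w w zb
        have e6 : ‖u₀‖ ≤ ‖U‖ + ‖(vℓ : Hb)‖ := norm_add_le _ _
        have e7 : Cta * ‖w‖ * ‖w‖ ≤ Cta * R ^ 2 := by
          nlinarith [mul_le_mul_of_nonneg_left (mul_self_le_mul_self (norm_nonneg w) hw) hCta]
        refine arith_div hα (norm_nonneg zb) ?_ ?_
        · have g1 : 0 ≤ ‖a‖ * ‖U‖ := by positivity
          have g2 : 0 ≤ Cta * R ^ 2 := by positivity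
          have g3 : 0 ≤ ‖a‖ * ‖(vℓ : Hb)‖ := by positivity
          linarith
        · nlinarith [norm_nonneg zb, norm_nonneg u₀, abs_nonneg (a u₀ zb),
            neg_abs_le (a u₀ zb), neg_abs_le (ta w w zb), a.opNorm_nonneg,
            mul_le_mul_of_nonneg_right e6 (mul_nonneg a.opNorm_nonneg (norm_nonneg zb))]
      have humem : u - U ∈ H₀ := by
        have h1 : u - U = (vℓ : Hb) + zb := by rw [hu, hu₀]; abel
        rw [h1]
        exact H₀.add_mem vℓ.2 hzbH
      have hubnd : ‖u‖ ≤ R := by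
        have h1 : ‖u‖ ≤ ‖U‖ + ‖(vℓ : Hb)‖ + ‖zb‖ := by
          rw [hu, hu₀]
          exact le_trans (norm_add_le _ _) (add_le_add_left (norm_add_le _ _) _)
        have hb1 : Cta * R ^ 2 + ‖a‖ * ‖U‖ + (α + ‖a‖) / β * (g₂ + ‖b U‖) + α * ‖U‖
            ≤ α * R := by
          have h2 := mul_le_mul_of_nonneg_left hball hα.le
          have h3 : α * (1 / α * (Cta * R ^ 2 + ‖a‖ * ‖U‖ + (α + ‖a‖) / β * (g₂ + ‖b U‖))
              + ‖U‖) = Cta * R ^ 2 + ‖a‖ * ‖U‖ + (α + ‖a‖) / β * (g₂ + ‖b U‖) + α * ‖U‖ := by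
            field_simp
          rw [h3] at h2
          exact h2
        have hb2 : (α + ‖a‖) * ‖(vℓ : Hb)‖ ≤ (α + ‖a‖) / β * (g₂ + ‖b U‖) := by
          rw [div_mul_eq_mul_div, le_div_iff₀ hβ]
          have h4 : 0 ≤ α + ‖a‖ := by positivity
          nlinarith [mul_le_mul_of_nonneg_left hvℓ3 h4]
        have h5 : α * ‖u‖ ≤ α * (‖U‖ + ‖(vℓ : Hb)‖ + ‖zb‖) :=
          mul_le_mul_of_nonneg_left h1 hα.le
        have h6 : α * (‖U‖ + ‖(vℓ : Hb)‖ + ‖zb‖) ≤ α * R := by nlinarith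
        exact le_of_mul_le_mul_left (le_trans h5 h6) hα
      have hVsol : ∀ v : V, a u (v : Hb) + ta w w (v : Hb) = 0 := by
        intro v
        have h1 := hz v
        rw [hdVa, hFVa] at h1
        have h2 : a u (v : Hb) = a u₀ (v : Hb) + a zb (v : Hb) := by
          rw [hu, map_add, ContinuousLinearMap.add_apply]
        rw [h2]
        linarith
      set F : H₀ →L[ℝ] ℝ := (-(a u + ta w w)).comp H₀.subtypeL with hFdef
      have hFa : ∀ v : H₀, F v = -(a u (v : Hb) + ta w w (v : Hb)) := fun _ => rfl
      obtain ⟨p, hp⟩ := pres F (by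
        intro v hv
        have hvV : (v : Hb) ∈ V := (hVmem _).mpr ⟨v.2, hv⟩
        have h1 := hVsol ⟨(v : Hb), hvV⟩
        rw [hFa]
        have h2 : a u ((⟨(v : Hb), hvV⟩ : V) : Hb) + ta w w ((⟨(v : Hb), hvV⟩ : V) : Hb) =
            a u (v : Hb) + ta w w (v : Hb) := rfl
        rw [h2] at h1
        rw [h1, neg_zero])
      refine ⟨u, p, humem, hubnd, ?_, ?_⟩
      · intro v hv
        have h3 := hp ⟨v, hv⟩
        rw [hFa] at h3
        have h4 : b ((⟨v, hv⟩ : H₀) : Hb) p = b v p := rfl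
        rw [h4] at h3
        have h5 : a u ((⟨v, hv⟩ : H₀) : Hb) = a u v := rfl
        have h6 : ta w w ((⟨v, hv⟩ : H₀) : Hb) = ta w w v := rfl
        rw [h5, h6] at h3
        linarith
      · intro m
        have h5 : b u m = b U m + b (vℓ : Hb) m + b zb m := by
          rw [hu, hu₀, map_add, map_add, ContinuousLinearMap.add_apply,
            ContinuousLinearMap.add_apply]
        rw [h5, hvℓ1 m, ContinuousLinearMap.sub_apply, hzb0 m]
        ring
    -- uniqueness of the Lagrange multiplier
    have puniq : ∀ p₁ p₂ : M, (∀ v : H₀, b (v : Hb) p₁ = b (v : Hb) p₂) → p₁ = p₂ := by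
      intro p₁ p₂ h
      have h1 : S (p₁ - p₂) = 0 := by
        have h2 : ∀ v : H₀, ⟪S (p₁ - p₂), v⟫_ℝ = 0 := by
          intro v
          rw [hS, map_sub, h v]
          ring
        have h3 := h2 (S (p₁ - p₂))
        rwa [inner_self_eq_zero] at h3
      exact sub_eq_zero.mp (hSinj _ h1)
    -- master difference estimate for nonlinear solutions
    have ns_diff : ∀ (u₁ u₂ : Hb) (p₁ p₂ : M) (f₁ f₂ : M →L[ℝ] ℝ),
        u₁ - U ∈ H₀ → ‖u₁‖ ≤ R →
        (∀ v ∈ H₀, a u₁ v + ta u₁ u₁ v + b v p₁ = 0) → (∀ m, b u₁ m = f₁ m) →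
        u₂ - U ∈ H₀ → ‖u₂‖ ≤ R →
        (∀ v ∈ H₀, a u₂ v + ta u₂ u₂ v + b v p₂ = 0) → (∀ m, b u₂ m = f₂ m) →
        (α - 2 * Cta * R) * ‖u₁ - u₂‖ ≤ ((α + ‖a‖) / β) * ‖f₁ - f₂‖ := by
      intro u₁ u₂ p₁ p₂ f₁ f₂ h11 h12 h13 h14 h21 h22 h23 h24
      obtain ⟨vd, hvd1, hvd2⟩ := lift (f₁ - f₂)
      have hdH : u₁ - u₂ ∈ H₀ := by
        have h0 := H₀.sub_mem h11 h21
        have h0' : u₁ - U - (u₂ - U) = u₁ - u₂ := by abel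
        rwa [h0'] at h0
      set zd : Hb := u₁ - u₂ - (vd : Hb) with hzd
      have hzdH : zd ∈ H₀ := H₀.sub_mem hdH vd.2
      have hzd0 : ∀ m, b zd m = 0 := by
        intro m
        rw [hzd, map_sub, ContinuousLinearMap.sub_apply, map_sub,
          ContinuousLinearMap.sub_apply, h14 m, h24 m, hvd1 m, ContinuousLinearMap.sub_apply]
        ring
      have e1 := h13 zd hzdH
      have e2 := h23 zd hzdH
      have e3 : a zd zd = -(a (vd : Hb) zd) -
          (ta (u₁ - u₂) u₁ zd + ta u₂ (u₁ - u₂) zd) := by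
        have r1 : a zd zd = a u₁ zd - a u₂ zd - a (vd : Hb) zd := by
          rw [hzd]
          simp only [map_sub, ContinuousLinearMap.sub_apply]
          try ring
        have r2 : ta (u₁ - u₂) u₁ zd = ta u₁ u₁ zd - ta u₂ u₁ zd := by
          simp only [map_sub, ContinuousLinearMap.sub_apply]
          try ring
        have r3 : ta u₂ (u₁ - u₂) zd = ta u₂ u₁ zd - ta u₂ u₂ zd := by
          simp only [map_sub, ContinuousLinearMap.sub_apply]
          try ring
        have r4 : b zd p₁ = 0 := hzd0 p₁
        have r5 : b zd p₂ = 0 := hzd0 p₂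
        rw [r1, r2, r3]
        linarith
      have e6 : α * ‖zd‖ ^ 2 ≤ a zd zd := hacoer zd hzdH
      have k1 : |a (vd : Hb) zd| ≤ ‖a‖ * ‖(vd : Hb)‖ * ‖zd‖ := by
        have := a.le_opNorm₂ (vd : Hb) zd
        rwa [Real.norm_eq_abs] at this
      have k2 := hta (u₁ - u₂) u₁ zd
      have k3 := hta u₂ (u₁ - u₂) zd
      have hsum : ‖u₁ - u₂‖ ≤ ‖(vd : Hb)‖ + ‖zd‖ := by
        have h' : u₁ - u₂ = (vd : Hb) + zd := by rw [hzd]; abel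
        rw [h']
        exact norm_add_le _ _
      exact arith_nsdiff hα hβ hcontr hCta a.opNorm_nonneg (norm_nonneg _) (norm_nonneg _)
        (norm_nonneg _) e6 e3 k1 k2 k3 h12 h22 (norm_nonneg _) (norm_nonneg _) hsum hvd2
    have hKin : (0:ℝ) < α - 2 * Cta * R := by linarith
    -- uniqueness of nonlinear solutions for fixed data
    have ns_unique : ∀ (f : M →L[ℝ] ℝ) (u₁ : Hb) (p₁ : M) (u₂ : Hb) (p₂ : M),
        (u₁ - U ∈ H₀) → ‖u₁‖ ≤ R → (∀ v ∈ H₀, a u₁ v + ta u₁ u₁ v + b v p₁ = 0) →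
        (∀ m, b u₁ m = f m) →
        (u₂ - U ∈ H₀) → ‖u₂‖ ≤ R → (∀ v ∈ H₀, a u₂ v + ta u₂ u₂ v + b v p₂ = 0) →
        (∀ m, b u₂ m = f m) → u₁ = u₂ ∧ p₁ = p₂ := by
      intro f u₁ p₁ u₂ p₂ h11 h12 h13 h14 h21 h22 h23 h24
      have h1 := ns_diff u₁ u₂ p₁ p₂ f f h11 h12 h13 h14 h21 h22 h23 h24
      rw [sub_self, norm_zero, mul_zero] at h1
      have hu : u₁ = u₂ := by
        have h2 : ‖u₁ - u₂‖ ≤ 0 := by nlinarith [norm_nonneg (u₁ - u₂)]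
        exact sub_eq_zero.mp (norm_le_zero_iff.mp h2)
      refine ⟨hu, puniq p₁ p₂ ?_⟩
      intro v
      have e1 := h13 (v : Hb) v.2
      have e2 := h23 (v : Hb) v.2
      rw [hu] at e1
      linarith
    -- solution operator for the linearized problem, by choice
    choose sol psol hsolmem hsolball hsoleq hsolcon using stokes
    -- the closed ball (affine constraint + norm bound)
    set Ball : Set Hb := {w : Hb | w - U ∈ H₀ ∧ ‖w‖ ≤ R} with hBallDef
    have hBallClosed : IsClosed Ball := by
      have h1 : Ball = ((fun w => w - U) ⁻¹' (H₀ : Set Hb)) ∩ {w : Hb | ‖w‖ ≤ R} := rfl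
      rw [h1]
      exact (hH₀.preimage (continuous_id.sub continuous_const)).inter
        (isClosed_le continuous_norm continuous_const)
    have hUBall : U ∈ Ball := ⟨by rw [sub_self]; exact H₀.zero_mem, hUR⟩
    haveI : Nonempty Ball := ⟨⟨U, hUBall⟩⟩
    haveI : CompleteSpace Ball := hBallClosed.completeSpace_coe
    -- inner Banach fixed point: the nonlinear NS problem for fixed data f
    have inner : ∀ f : M →L[ℝ] ℝ, ‖f‖ ≤ g₂ →
        ∃ u : Hb, ∃ p : M, (u - U ∈ H₀) ∧ ‖u‖ ≤ R ∧
          (∀ v ∈ H₀, a u v + ta u u v + b v p = 0) ∧ (∀ m, b u m = f m) := by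
      intro f hf
      set Φ : Ball → Ball := fun w =>
        ⟨sol w.1 w.2.2 f hf, hsolmem w.1 w.2.2 f hf, hsolball w.1 w.2.2 f hf⟩ with hΦ
      have hΦlip : ∀ w₁ w₂ : Ball,
          ‖(Φ w₁).1 - (Φ w₂).1‖ ≤ (2 * Cta * R / α) * ‖w₁.1 - w₂.1‖ := by
        intro w₁ w₂
        show ‖sol w₁.1 w₁.2.2 f hf - sol w₂.1 w₂.2.2 f hf‖ ≤ _
        set u₁ := sol w₁.1 w₁.2.2 f hf with hu₁
        set u₂ := sol w₂.1 w₂.2.2 f hf with hu₂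
        have h11 := hsolmem w₁.1 w₁.2.2 f hf
        have h13 := hsoleq w₁.1 w₁.2.2 f hf
        have h14 := hsolcon w₁.1 w₁.2.2 f hf
        have h21 := hsolmem w₂.1 w₂.2.2 f hf
        have h23 := hsoleq w₂.1 w₂.2.2 f hf
        have h24 := hsolcon w₂.1 w₂.2.2 f hf
        have hdH : u₁ - u₂ ∈ H₀ := by
          have h0 := H₀.sub_mem h11 h21
          have h0' : u₁ - U - (u₂ - U) = u₁ - u₂ := by abel
          rwa [h0'] at h0
        have hd0 : ∀ m, b (u₁ - u₂) m = 0 := by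
          intro m
          rw [map_sub, ContinuousLinearMap.sub_apply, h14 m, h24 m]
          ring
        have e1 := h13 (u₁ - u₂) hdH
        have e2 := h23 (u₁ - u₂) hdH
        have e3 : a (u₁ - u₂) (u₁ - u₂) =
            -(ta (w₁.1 - w₂.1) w₁.1 (u₁ - u₂) + ta w₂.1 (w₁.1 - w₂.1) (u₁ - u₂)) := by
          have r1 : a (u₁ - u₂) (u₁ - u₂) = a u₁ (u₁ - u₂) - a u₂ (u₁ - u₂) := by
            simp only [map_sub, ContinuousLinearMap.sub_apply]
            try ring
          have r2 : ta (w₁.1 - w₂.1) w₁.1 (u₁ - u₂) =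
              ta w₁.1 w₁.1 (u₁ - u₂) - ta w₂.1 w₁.1 (u₁ - u₂) := by
            simp only [map_sub, ContinuousLinearMap.sub_apply]
            try ring
          have r3 : ta w₂.1 (w₁.1 - w₂.1) (u₁ - u₂) =
              ta w₂.1 w₁.1 (u₁ - u₂) - ta w₂.1 w₂.1 (u₁ - u₂) := by
            simp only [map_sub, ContinuousLinearMap.sub_apply]
            try ring
          have r4 := hd0 (psol w₁.1 w₁.2.2 f hf)
          have r5 := hd0 (psol w₂.1 w₂.2.2 f hf)
          rw [r1, r2, r3]
          linarith
        have e6 : α * ‖u₁ - u₂‖ ^ 2 ≤ a (u₁ - u₂) (u₁ - u₂) := hacoer _ hdH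
        have k1 := hta (w₁.1 - w₂.1) w₁.1 (u₁ - u₂)
        have k2 := hta w₂.1 (w₁.1 - w₂.1) (u₁ - u₂)
        have key := arith_lindiff hα hCta hR (norm_nonneg _) (norm_nonneg _)
          (norm_nonneg _) (norm_nonneg _) w₁.2.2 w₂.2.2 e6 e3 k1 k2
        rw [div_mul_eq_mul_div, le_div_iff₀ hα]
        linarith
      have hcw : ContractingWith (Real.toNNReal (2 * Cta * R / α)) Φ := by
        constructor
        · rw [← Real.toNNReal_one, Real.toNNReal_lt_toNNReal_iff (by norm_num : (0:ℝ) < 1),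
            div_lt_one hα]
          linarith
        · refine LipschitzWith.of_dist_le_mul (fun w₁ w₂ => ?_)
          have h1 := hΦlip w₁ w₂
          have h2 : (Real.toNNReal (2 * Cta * R / α) : ℝ) = max (2 * Cta * R / α) 0 :=
            Real.coe_toNNReal' _
          calc dist (Φ w₁) (Φ w₂) = ‖(Φ w₁).1 - (Φ w₂).1‖ := by
                rw [Subtype.dist_eq, dist_eq_norm]
            _ ≤ (2 * Cta * R / α) * ‖w₁.1 - w₂.1‖ := h1
            _ ≤ max (2 * Cta * R / α) 0 * ‖w₁.1 - w₂.1‖ :=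
                mul_le_mul_of_nonneg_right (le_max_left _ _) (norm_nonneg _)
            _ = (Real.toNNReal (2 * Cta * R / α) : ℝ) * dist w₁ w₂ := by
                rw [h2, Subtype.dist_eq, dist_eq_norm]
      set ustar := ContractingWith.fixedPoint Φ hcw with hustar
      have hfix : Φ ustar = ustar := hcw.fixedPoint_isFixedPt
      have hueq : sol ustar.1 ustar.2.2 f hf = ustar.1 := congrArg Subtype.val hfix
      refine ⟨ustar.1, psol ustar.1 ustar.2.2 f hf, ustar.2.1, ustar.2.2, ?_, ?_⟩
      · intro v hv
        have h := hsoleq ustar.1 ustar.2.2 f hf v hv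
        rwa [hueq] at h
      · intro m
        have h := hsolcon ustar.1 ustar.2.2 f hf m
        rwa [hueq] at h
    choose nsol npsol hnmem hnball hneq hncon using inner
    -- transport solution selection
    choose θof hθofZ hθofeq using fun w : Ball => (transport w.1 w.2.1 w.2.2).exists
    have θof_unique : ∀ (w : Ball) (θ : Zb),
        θ - Θ ∈ Z₀ → (∀ τ ∈ Z₀, c θ τ + tc w.1 θ τ = 0) → θ = θof w :=
      fun w θ h1 h2 => (transport w.1 w.2.1 w.2.2).unique ⟨h1, h2⟩ ⟨hθofZ w, hθofeq w⟩
    -- Lipschitz property of the transport solution operator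
    set LT : ℝ := (Ctc / γ) * (((‖c‖ + Ctc * R) / γ) + 1) * ‖Θ‖ with hLTdef
    have trans_lip : ∀ w₁ w₂ : Ball, ‖θof w₁ - θof w₂‖ ≤ LT * ‖w₁.1 - w₂.1‖ := by
      rcases subsingleton_or_nontrivial Zb with hZs | hZn
      · intro w₁ w₂
        have h1 : θof w₁ = θof w₂ := Subsingleton.elim _ _
        have h2 : ‖Θ‖ = 0 := by rw [Subsingleton.elim Θ (0 : Zb), norm_zero]
        rw [h1, sub_self, norm_zero, hLTdef, h2]
        have h3 : Ctc / γ * ((‖c‖ + Ctc * R) / γ + 1) * 0 * ‖w₁.1 - w₂.1‖ = 0 := by ring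
        rw [h3]
      · obtain ⟨z₀, hz₀⟩ := exists_ne (0 : Zb)
        have hCtc : 0 ≤ Ctc := by
          have h1 := htc x₀ z₀ z₀
          have h2 : 0 < ‖x₀‖ := norm_pos_iff.mpr hx₀
          have h3 : 0 < ‖z₀‖ := norm_pos_iff.mpr hz₀
          nlinarith [abs_nonneg (tc x₀ z₀ z₀), mul_pos (mul_pos h2 h3) h3]
        intro w₁ w₂
        set θ₁ := θof w₁ with hθ₁
        set θ₂ := θof w₂ with hθ₂
        have hδZ : θ₁ - θ₂ ∈ Z₀ := by
          have h0 := Z₀.sub_mem (hθofZ w₁) (hθofZ w₂)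
          have h0' : θ₁ - Θ - (θ₂ - Θ) = θ₁ - θ₂ := by abel
          rwa [h0'] at h0
        have e1 := hθofeq w₁ (θ₁ - θ₂) hδZ
        have e2 := hθofeq w₂ (θ₁ - θ₂) hδZ
        have e3 : c (θ₁ - θ₂) (θ₁ - θ₂) + tc w₁.1 (θ₁ - θ₂) (θ₁ - θ₂) =
            -(tc (w₁.1 - w₂.1) θ₂ (θ₁ - θ₂)) := by
          have r1 : c (θ₁ - θ₂) (θ₁ - θ₂) = c θ₁ (θ₁ - θ₂) - c θ₂ (θ₁ - θ₂) := by
            simp only [map_sub, ContinuousLinearMap.sub_apply]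
            try ring
          have r2 : tc w₁.1 (θ₁ - θ₂) (θ₁ - θ₂) =
              tc w₁.1 θ₁ (θ₁ - θ₂) - tc w₁.1 θ₂ (θ₁ - θ₂) := by
            simp only [map_sub, ContinuousLinearMap.sub_apply]
            try ring
          have r3 : tc (w₁.1 - w₂.1) θ₂ (θ₁ - θ₂) =
              tc w₁.1 θ₂ (θ₁ - θ₂) - tc w₂.1 θ₂ (θ₁ - θ₂) := by
            simp only [map_sub, ContinuousLinearMap.sub_apply]
            try ring
          rw [r1, r2, r3]
          linarith
        have e4 : γ * ‖θ₁ - θ₂‖ ^ 2 ≤ c (θ₁ - θ₂) (θ₁ - θ₂) := hccoer _ hδZ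
        have e5 : 0 ≤ tc w₁.1 (θ₁ - θ₂) (θ₁ - θ₂) := hpos w₁.1 w₁.2.1 w₁.2.2 _ hδZ
        have k1 := htc (w₁.1 - w₂.1) θ₂ (θ₁ - θ₂)
        have key1 : γ * ‖θ₁ - θ₂‖ ≤ Ctc * ‖w₁.1 - w₂.1‖ * ‖θ₂‖ := by
          refine arith_div hγ (norm_nonneg _) (by positivity) ?_
          linarith [neg_abs_le (tc (w₁.1 - w₂.1) θ₂ (θ₁ - θ₂))]
        set ζ₂ : Zb := θ₂ - Θ with hζ₂
        have hζZ : ζ₂ ∈ Z₀ := hθofZ w₂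
        have f1 := hθofeq w₂ ζ₂ hζZ
        have hθ₂Θ : θ₂ = Θ + ζ₂ := by rw [hζ₂]; abel
        have f2 : c ζ₂ ζ₂ + tc w₂.1 ζ₂ ζ₂ = -(c Θ ζ₂ + tc w₂.1 Θ ζ₂) := by
          have r1 : c θ₂ ζ₂ = c Θ ζ₂ + c ζ₂ ζ₂ := by
            rw [hθ₂Θ, map_add, ContinuousLinearMap.add_apply]
          have r2 : tc w₂.1 θ₂ ζ₂ = tc w₂.1 Θ ζ₂ + tc w₂.1 ζ₂ ζ₂ := by
            rw [hθ₂Θ, map_add, ContinuousLinearMap.add_apply]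
          rw [r1, r2] at f1
          linarith
        have f3 : γ * ‖ζ₂‖ ^ 2 ≤ c ζ₂ ζ₂ := hccoer _ hζZ
        have f4 : 0 ≤ tc w₂.1 ζ₂ ζ₂ := hpos w₂.1 w₂.2.1 w₂.2.2 _ hζZ
        have f5 : |c Θ ζ₂| ≤ ‖c‖ * ‖Θ‖ * ‖ζ₂‖ := by
          have := c.le_opNorm₂ Θ ζ₂
          rwa [Real.norm_eq_abs] at this
        have f6 := htc w₂.1 Θ ζ₂
        have f7 : Ctc * ‖w₂.1‖ * ‖Θ‖ * ‖ζ₂‖ ≤ Ctc * R * ‖Θ‖ * ‖ζ₂‖ := by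
          have h9 := mul_le_mul_of_nonneg_left w₂.2.2
            (by positivity : (0:ℝ) ≤ Ctc * ‖Θ‖ * ‖ζ₂‖)
          linarith
        have key2 : γ * ‖ζ₂‖ ≤ (‖c‖ + Ctc * R) * ‖Θ‖ := by
          refine arith_div hγ (norm_nonneg _) (by positivity) ?_
          linarith [neg_abs_le (c Θ ζ₂), neg_abs_le (tc w₂.1 Θ ζ₂)]
        have key3 : ‖θ₂‖ ≤ ‖Θ‖ + ‖ζ₂‖ := by
          rw [hθ₂Θ]
          exact norm_add_le _ _
        rw [hLTdef]
        exact arith_trans hγ hCtc c.opNorm_nonneg hR.le (norm_nonneg Θ) (norm_nonneg _)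
          (norm_nonneg _) (norm_nonneg _) (norm_nonneg _) key1 key2 key3
    -- the outer fixed-point map
    set Ψ : Ball → Ball := fun w =>
      ⟨nsol (g (θof w)) (hgbdd (θof w)), hnmem (g (θof w)) (hgbdd (θof w)),
        hnball (g (θof w)) (hgbdd (θof w))⟩ with hΨ
    set K : ℝ := ((α + ‖a‖) * Lg / (β * (α - 2 * Cta * R))) * LT with hK
    have hΨlip : ∀ w₁ w₂ : Ball, ‖(Ψ w₁).1 - (Ψ w₂).1‖ ≤ K * ‖w₁.1 - w₂.1‖ := by
      intro w₁ w₂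
      show ‖nsol (g (θof w₁)) (hgbdd (θof w₁)) - nsol (g (θof w₂)) (hgbdd (θof w₂))‖ ≤ _
      have h1 := ns_diff (nsol (g (θof w₁)) (hgbdd (θof w₁)))
        (nsol (g (θof w₂)) (hgbdd (θof w₂)))
        (npsol (g (θof w₁)) (hgbdd (θof w₁))) (npsol (g (θof w₂)) (hgbdd (θof w₂)))
        (g (θof w₁)) (g (θof w₂))
        (hnmem _ _) (hnball _ _) (hneq _ _) (hncon _ _)
        (hnmem _ _) (hnball _ _) (hneq _ _) (hncon _ _)
      have h2 : ‖g (θof w₁) - g (θof w₂)‖ ≤ Lg * ‖θof w₁ - θof w₂‖ := hgLip _ _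
      have h3 := trans_lip w₁ w₂
      rcases subsingleton_or_nontrivial Zb with hZs | hZn
      · have hθeq : θof w₁ = θof w₂ := Subsingleton.elim _ _
        have hfe : g (θof w₁) = g (θof w₂) := by rw [hθeq]
        have h4 : ‖g (θof w₁) - g (θof w₂)‖ = 0 := by rw [hfe, sub_self, norm_zero]
        rw [h4, mul_zero] at h1
        have h5 : ‖nsol (g (θof w₁)) (hgbdd (θof w₁)) -
            nsol (g (θof w₂)) (hgbdd (θof w₂))‖ ≤ 0 := by
          nlinarith [norm_nonneg (nsol (g (θof w₁)) (hgbdd (θof w₁)) -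
            nsol (g (θof w₂)) (hgbdd (θof w₂)))]
        have h6 : ‖Θ‖ = 0 := by rw [Subsingleton.elim Θ (0 : Zb), norm_zero]
        have h7 : K * ‖w₁.1 - w₂.1‖ = 0 := by
          rw [hK, hLTdef, h6]
          ring
        rw [h7]
        exact h5
      · have hLg0 : 0 ≤ Lg := by
          obtain ⟨z₁, hz₁⟩ := exists_ne (0 : Zb)
          have hl := hgLip z₁ 0
          have h2' : 0 < ‖z₁ - (0 : Zb)‖ := by
            rw [sub_zero]
            exact norm_pos_iff.mpr hz₁
          nlinarith [norm_nonneg (g z₁ - g 0)]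
        have hCtc : 0 ≤ Ctc := by
          obtain ⟨z₀, hz₀⟩ := exists_ne (0 : Zb)
          have k1 := htc x₀ z₀ z₀
          have k2 : 0 < ‖x₀‖ := norm_pos_iff.mpr hx₀
          have k3 : 0 < ‖z₀‖ := norm_pos_iff.mpr hz₀
          nlinarith [abs_nonneg (tc x₀ z₀ z₀), mul_pos (mul_pos k2 k3) k3]
        have hLT0 : 0 ≤ LT := by
          rw [hLTdef]
          have n1 : 0 ≤ Ctc / γ := div_nonneg hCtc hγ.le
          have n2 : (0:ℝ) ≤ (‖c‖ + Ctc * R) / γ + 1 := by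
            have : 0 ≤ ‖c‖ + Ctc * R :=
              add_nonneg c.opNorm_nonneg (mul_nonneg hCtc hR.le)
            positivity
          exact mul_nonneg (mul_nonneg n1 n2) (norm_nonneg Θ)
        rw [hK]
        exact arith_outer hKin hβ hα a.opNorm_nonneg hLg0 hLT0 (norm_nonneg _)
          (norm_nonneg _) (norm_nonneg _) h1 h2 h3
    have hcwΨ : ContractingWith (Real.toNNReal K) Ψ := by
      constructor
      · rw [← Real.toNNReal_one, Real.toNNReal_lt_toNNReal_iff (by norm_num : (0:ℝ) < 1)]
        rw [hK, hLTdef]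
        exact hLT
      · refine LipschitzWith.of_dist_le_mul (fun w₁ w₂ => ?_)
        have h1 := hΨlip w₁ w₂
        have h2 : (Real.toNNReal K : ℝ) = max K 0 := Real.coe_toNNReal' _
        calc dist (Ψ w₁) (Ψ w₂) = ‖(Ψ w₁).1 - (Ψ w₂).1‖ := by
              rw [Subtype.dist_eq, dist_eq_norm]
          _ ≤ K * ‖w₁.1 - w₂.1‖ := h1
          _ ≤ max K 0 * ‖w₁.1 - w₂.1‖ :=
              mul_le_mul_of_nonneg_right (le_max_left _ _) (norm_nonneg _)
          _ = (Real.toNNReal K : ℝ) * dist w₁ w₂ := by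
              rw [h2, Subtype.dist_eq, dist_eq_norm]
    set wstar := ContractingWith.fixedPoint Ψ hcwΨ with hwstarDef
    have hfixΨ : Ψ wstar = wstar := hcwΨ.fixedPoint_isFixedPt
    have hweq : nsol (g (θof wstar)) (hgbdd (θof wstar)) = wstar.1 :=
      congrArg Subtype.val hfixΨ
    refine ⟨(wstar.1, npsol (g (θof wstar)) (hgbdd (θof wstar)), θof wstar),
      ⟨wstar.2.1, wstar.2.2, hθofZ wstar, ?_, ?_, ?_⟩, ?_⟩
    · intro v hv
      have h := hneq (g (θof wstar)) (hgbdd (θof wstar)) v hv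
      rwa [hweq] at h
    · intro m
      have h := hncon (g (θof wstar)) (hgbdd (θof wstar)) m
      rwa [hweq] at h
    · exact hθofeq wstar
    · rintro ⟨u, p, θ⟩ ⟨hu1, hu2, hθ1, heq1, heq2, heq3⟩
      have huB : u ∈ Ball := ⟨hu1, hu2⟩
      set w : Ball := (⟨u, huB⟩ : Ball) with hwdef
      have hθw : θ = θof w := θof_unique w θ hθ1 heq3
      have hfθ : ∀ m, b u m = g (θof w) m := by
        intro m
        rw [← hθw]
        exact heq2 m
      have huu := ns_unique (g (θof w)) u p
        (nsol (g (θof w)) (hgbdd (θof w))) (npsol (g (θof w)) (hgbdd (θof w)))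
        hu1 hu2 heq1 hfθ (hnmem _ _) (hnball _ _) (hneq _ _) (hncon _ _)
      have hfixw : Ψ w = w := by
        apply Subtype.ext
        show nsol (g (θof w)) (hgbdd (θof w)) = u
        exact huu.1.symm
      have hwstar : w = wstar := hcwΨ.fixedPoint_unique hfixw
      have hu_eq : u = wstar.1 := congrArg Subtype.val hwstar
      have hθ_eq : θ = θof wstar := by rw [hθw, hwstar]
      have hp_eq : p = npsol (g (θof wstar)) (hgbdd (θof wstar)) := by
        have h2 := ns_unique (g (θof wstar)) u p
          (nsol (g (θof wstar)) (hgbdd (θof wstar)))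
          (npsol (g (θof wstar)) (hgbdd (θof wstar)))
          hu1 hu2 heq1 (by intro m; rw [← hθ_eq]; exact heq2 m)
          (hnmem _ _) (hnball _ _) (hneq _ _) (hncon _ _)
        exact h2.2
      simp only [Prod.mk.injEq]
      exact ⟨hu_eq, hp_eq, hθ_eq⟩
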